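/- arXiv:2007.15743 — 3 statements merged into one kernel-verified Lean document; each statement's English description precedes it below -/
import Mathlib

section
/- Let G be a PLB graph on n ≥ 2 vertices with constant c₀, fix a linear order on the vertices, and for each vertex v let d⁺_v denote the number of neighbors u of v such that either deg(u) > deg(v), or deg(u) = deg(v) and u comes after v in the linear order. If the PLB exponent is γ = 3, then Σ_v (d⁺_v)^2 ≤ C · n · log n for a constant C depending only on c₀; if the PLB exponent is γ > 3, then Σ_v (d⁺_v)^2 ≤ C · n for a constant C depending only on c₀ and γ. -/
/-- The number of vertices of `G` of degree exactly `d`. -/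
noncomputable def degCount {V : Type*} [Fintype V] (G : SimpleGraph V) (d : ℕ) : ℕ :=
  {v : V | {u | G.Adj v u}.ncard = d}.ncard

/-- `G` is power-law bounded with exponent `γ` and constant `c₀` if for every `r ≥ 0`,
`Σ_{d=2^r}^{2^(r+1)} n(d) ≤ c₀ n Σ_{d=2^r}^{2^(r+1)} d^(-γ)`. -/
def IsPLB {V : Type*} [Fintype V] (G : SimpleGraph V) (γ c₀ : ℝ) : Prop :=
  ∀ r : ℕ,
    (∑ d ∈ Finset.Icc (2 ^ r : ℕ) (2 ^ (r + 1)), (degCount G d : ℝ)) ≤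
      c₀ * (Fintype.card V : ℝ) *
        ∑ d ∈ Finset.Icc (2 ^ r : ℕ) (2 ^ (r + 1)), (d : ℝ) ^ (-γ)

/-- The out-degree of `v` when each edge of `G` is directed from its lower-degree
endpoint to its higher-degree endpoint (ties broken by the linear order): the number
of neighbors `u` of `v` with `deg u > deg v`, or `deg u = deg v` and `v < u`. -/
noncomputable def outDeg {V : Type*} [Fintype V] [LinearOrder V]
    (G : SimpleGraph V) (v : V) : ℕ :=
  {u : V | G.Adj v u ∧
    ({w | G.Adj v w}.ncard < {w | G.Adj u w}.ncard ∨
      ({w | G.Adj u w}.ncard = {w | G.Adj v w}.ncard ∧ v < u))}.ncard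

namespace PLBAux

open Finset

/-- The degree of a vertex, as used in `degCount`/`outDeg`. -/
noncomputable def dg {V : Type*} [Fintype V] (G : SimpleGraph V) (v : V) : ℕ :=
  {w | G.Adj v w}.ncard

/-- The set of vertices whose degree lies in the dyadic band `[2^r, 2^(r+1)]`. -/
noncomputable def bandF {V : Type*} [Fintype V] (G : SimpleGraph V) (r : ℕ) : Finset V :=
  Finset.univ.filter fun v => dg G v ∈ Finset.Icc (2 ^ r) (2 ^ (r + 1))

variable {V : Type*} [Fintype V]

lemma dg_le_card (G : SimpleGraph V) (v : V) : dg G v ≤ Fintype.card V := by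
  have h : dg G v ≤ (Set.univ : Set V).ncard :=
    Set.ncard_le_ncard (Set.subset_univ _) Set.finite_univ
  simpa [Set.ncard_univ, Nat.card_eq_fintype_card] using h

lemma outDeg_le_dg [LinearOrder V] (G : SimpleGraph V) (v : V) : outDeg G v ≤ dg G v :=
  Set.ncard_le_ncard (fun u hu => hu.1) (Set.toFinite _)

lemma outDeg_le_H [LinearOrder V] (G : SimpleGraph V) (v : V) (ρ : ℕ)
    (hρ : 2 ^ ρ ≤ dg G v) :
    outDeg G v ≤ (Finset.univ.filter fun u => 2 ^ ρ ≤ dg G u).card := by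
  rw [outDeg, ← Set.ncard_coe_finset]
  refine Set.ncard_le_ncard ?_ (Set.toFinite _)
  intro u hu
  obtain ⟨-, h⟩ := hu
  simp only [Finset.coe_filter, Set.mem_setOf_eq, Finset.mem_univ, true_and]
  unfold dg at hρ ⊢
  rcases h with h | h
  · exact hρ.trans h.le
  · exact h.1 ▸ hρ

/-- Dyadic cover of `[2^ρ, n]`. -/
lemma band_cover {m n ρ : ℕ} (hm : m ≤ n) (hρ : 2 ^ ρ ≤ m) :
    ∃ r, ρ ≤ r ∧ r ≤ n ∧ m ∈ Finset.Icc (2 ^ r) (2 ^ (r + 1)) := by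
  have hm0 : m ≠ 0 := by
    have : 0 < 2 ^ ρ := by positivity
    omega
  refine ⟨Nat.log 2 m, ?_, ?_, ?_⟩
  · exact (Nat.le_log_iff_pow_le one_lt_two hm0).mpr hρ
  · exact (Nat.log_mono_right hm).trans (Nat.log_le_self 2 n)
  · exact Finset.mem_Icc.mpr
      ⟨Nat.pow_log_le_self 2 hm0, (Nat.lt_pow_succ_log_self one_lt_two m).le⟩

lemma degCount_eq (G : SimpleGraph V) (d : ℕ) :
    degCount G d = (Finset.univ.filter fun v => dg G v = d).card := by
  rw [degCount, ← Set.ncard_coe_finset]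
  congr 1
  ext v
  rw [Finset.mem_coe, Finset.mem_filter]
  simp [dg]

lemma bandF_card_eq (G : SimpleGraph V) (r : ℕ) :
    ((bandF G r).card : ℝ) =
      ∑ d ∈ Finset.Icc (2 ^ r : ℕ) (2 ^ (r + 1)), (degCount G d : ℝ) := by
  have h : (bandF G r).card =
      ∑ d ∈ Finset.Icc (2 ^ r : ℕ) (2 ^ (r + 1)),
        ((bandF G r).filter fun v => dg G v = d).card :=
    Finset.card_eq_sum_card_fiberwise (fun v hv => by simpa [bandF] using hv)
  rw [h]
  push_cast
  refine Finset.sum_congr rfl fun d hd => ?_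
  have hfib : ((bandF G r).filter fun v => dg G v = d) =
      (Finset.univ.filter fun v => dg G v = d) := by
    ext v
    simp only [bandF, Finset.filter_filter, Finset.mem_filter, Finset.mem_univ, true_and]
    constructor
    · rintro ⟨-, h2⟩; exact h2
    · rintro h2; exact ⟨h2 ▸ hd, h2⟩
  rw [degCount_eq, hfib]

lemma bandF_card_le (G : SimpleGraph V) {γ c₀ : ℝ} (hγ : 0 < γ) (hc₀ : 0 < c₀)
    (h : IsPLB G γ c₀) (r : ℕ) :
    ((bandF G r).card : ℝ) ≤
      2 * c₀ * (Fintype.card V : ℝ) * ((2 : ℝ) ^ r * ((2 : ℝ) ^ r) ^ (-γ)) := by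
  have h2r : (0 : ℝ) < (2 : ℝ) ^ r := by positivity
  have hsum : ∑ d ∈ Finset.Icc (2 ^ r : ℕ) (2 ^ (r + 1)), (d : ℝ) ^ (-γ) ≤
      ((2 : ℝ) ^ r + 1) * ((2 : ℝ) ^ r) ^ (-γ) := by
    have hb : ∀ d ∈ Finset.Icc (2 ^ r : ℕ) (2 ^ (r + 1)),
        (d : ℝ) ^ (-γ) ≤ ((2 : ℝ) ^ r) ^ (-γ) := by
      intro d hd
      have hd1 : (2 : ℕ) ^ r ≤ d := (Finset.mem_Icc.mp hd).1
      have hd1' : (2 : ℝ) ^ r ≤ (d : ℝ) := by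
        calc (2 : ℝ) ^ r = ((2 ^ r : ℕ) : ℝ) := by push_cast; ring
          _ ≤ (d : ℝ) := by exact_mod_cast hd1
      exact Real.rpow_le_rpow_of_nonpos h2r hd1' (by linarith)
    calc ∑ d ∈ Finset.Icc (2 ^ r : ℕ) (2 ^ (r + 1)), (d : ℝ) ^ (-γ)
        ≤ (Finset.Icc (2 ^ r : ℕ) (2 ^ (r + 1))).card • (((2 : ℝ) ^ r) ^ (-γ)) :=
          Finset.sum_le_card_nsmul _ _ _ hb
      _ = ((Finset.Icc (2 ^ r : ℕ) (2 ^ (r + 1))).card : ℝ) * ((2 : ℝ) ^ r) ^ (-γ) := by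
          rw [nsmul_eq_mul]
      _ ≤ ((2 : ℝ) ^ r + 1) * ((2 : ℝ) ^ r) ^ (-γ) := by
          have hcard : (Finset.Icc (2 ^ r : ℕ) (2 ^ (r + 1))).card = 2 ^ r + 1 := by
            rw [Nat.card_Icc]
            have : (2 : ℕ) ^ (r + 1) = 2 * 2 ^ r := by rw [pow_succ]; ring
            omega
          rw [hcard]
          push_cast
          exact le_rfl
  have hcn : (0 : ℝ) ≤ c₀ * (Fintype.card V : ℝ) := by positivity
  have hp : (0 : ℝ) ≤ ((2 : ℝ) ^ r) ^ (-γ) := Real.rpow_nonneg h2r.le _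
  have h1 : (1 : ℝ) ≤ (2 : ℝ) ^ r := one_le_pow₀ (by norm_num)
  calc ((bandF G r).card : ℝ)
      = ∑ d ∈ Finset.Icc (2 ^ r : ℕ) (2 ^ (r + 1)), (degCount G d : ℝ) :=
        bandF_card_eq G r
    _ ≤ c₀ * (Fintype.card V : ℝ) *
        ∑ d ∈ Finset.Icc (2 ^ r : ℕ) (2 ^ (r + 1)), (d : ℝ) ^ (-γ) := h r
    _ ≤ c₀ * (Fintype.card V : ℝ) * (((2 : ℝ) ^ r + 1) * ((2 : ℝ) ^ r) ^ (-γ)) :=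
        mul_le_mul_of_nonneg_left hsum hcn
    _ ≤ 2 * c₀ * (Fintype.card V : ℝ) * ((2 : ℝ) ^ r * ((2 : ℝ) ^ r) ^ (-γ)) := by
        nlinarith [mul_le_mul_of_nonneg_right
          (show (2 : ℝ) ^ r + 1 ≤ 2 * (2 : ℝ) ^ r by linarith) hp]

/-- Decompose a sum over vertices into dyadic degree bands. -/
lemma sum_le_bands (G : SimpleGraph V) (g : V → ℝ) (hg : ∀ v, 0 ≤ g v)
    (hg0 : ∀ v, dg G v = 0 → g v = 0) :
    ∑ v, g v ≤ ∑ r ∈ Finset.range (Fintype.card V + 1), ∑ v ∈ bandF G r, g v := by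
  classical
  have key : ∀ v : V, g v ≤
      ∑ r ∈ Finset.range (Fintype.card V + 1), (if v ∈ bandF G r then g v else 0) := by
    intro v
    by_cases h0 : dg G v = 0
    · rw [hg0 v h0]
      exact Finset.sum_nonneg fun r _ => by positivity
    · obtain ⟨r, -, hr2, hr3⟩ := band_cover (dg_le_card G v) (by omega : 2 ^ 0 ≤ dg G v)
      have hmem : r ∈ Finset.range (Fintype.card V + 1) := Finset.mem_range.mpr (by omega)
      have hnn : ∀ i ∈ Finset.range (Fintype.card V + 1),
          0 ≤ if v ∈ bandF G i then g v else 0 := by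
        intro i _
        by_cases hvi : v ∈ bandF G i <;> simp [hvi, hg v]
      have := Finset.single_le_sum
        (f := fun r => if v ∈ bandF G r then g v else 0) hnn hmem
      obtain ⟨ha, hb⟩ := Finset.mem_Icc.mp hr3
      simpa [bandF, ha, hb] using this
  calc ∑ v, g v ≤ ∑ v, ∑ r ∈ Finset.range (Fintype.card V + 1),
        (if v ∈ bandF G r then g v else 0) :=
        Finset.sum_le_sum fun v _ => key v
    _ = ∑ r ∈ Finset.range (Fintype.card V + 1), ∑ v,
        (if v ∈ bandF G r then g v else 0) := Finset.sum_comm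
    _ = ∑ r ∈ Finset.range (Fintype.card V + 1), ∑ v ∈ bandF G r, g v := by
        refine Finset.sum_congr rfl fun r _ => ?_
        rw [Finset.sum_ite_mem, Finset.univ_inter]

/-- The number of vertices of degree at least `2^ρ` is at most the total size of the
bands from `ρ` on. -/
lemma H_card_le (G : SimpleGraph V) (ρ : ℕ) :
    ((Finset.univ.filter fun u => 2 ^ ρ ≤ dg G u).card : ℝ) ≤
      ∑ r ∈ Finset.Icc ρ (Fintype.card V), ((bandF G r).card : ℝ) := by
  classical
  have h1 : (Finset.univ.filter fun u => 2 ^ ρ ≤ dg G u) ⊆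
      (Finset.Icc ρ (Fintype.card V)).biUnion (bandF G) := by
    intro u hu
    simp only [Finset.mem_filter, Finset.mem_univ, true_and] at hu
    obtain ⟨r, hr1, hr2, hr3⟩ := band_cover (dg_le_card G u) hu
    refine Finset.mem_biUnion.mpr ⟨r, Finset.mem_Icc.mpr ⟨hr1, hr2⟩, ?_⟩
    simp only [bandF, Finset.mem_filter, Finset.mem_univ, true_and]
    exact hr3
  have h2 := (Finset.card_le_card h1).trans Finset.card_biUnion_le
  exact_mod_cast h2

/-- Finite geometric sum bound. -/
lemma geom_range_le {x : ℝ} (h0 : 0 ≤ x) (h1 : x < 1) (m : ℕ) :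
    ∑ i ∈ Finset.range m, x ^ i ≤ (1 - x)⁻¹ := by
  calc ∑ i ∈ Finset.range m, x ^ i ≤ ∑' i : ℕ, x ^ i :=
        Summable.sum_le_tsum _ (fun i _ => pow_nonneg h0 i) (summable_geometric_of_lt_one h0 h1)
    _ = (1 - x)⁻¹ := tsum_geometric_of_lt_one h0 h1

/-- Geometric tail sum bound. -/
lemma geom_Icc_le {x : ℝ} (h0 : 0 ≤ x) (h1 : x < 1) (ρ N : ℕ) :
    ∑ r ∈ Finset.Icc ρ N, x ^ r ≤ x ^ ρ * (1 - x)⁻¹ := by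
  rw [← Finset.Ico_add_one_right_eq_Icc, Finset.sum_Ico_eq_sum_range]
  have : ∀ i, x ^ (ρ + i) = x ^ ρ * x ^ i := fun i => pow_add x ρ i
  rw [Finset.sum_congr rfl fun i _ => this i, ← Finset.mul_sum]
  exact mul_le_mul_of_nonneg_left (geom_range_le h0 h1 _) (pow_nonneg h0 ρ)

lemma natlog_le_log {n : ℕ} (hn : 2 ≤ n) :
    (Nat.log 2 n : ℝ) * Real.log 2 ≤ Real.log n := by
  have h := Nat.pow_log_le_self 2 (by omega : n ≠ 0)
  have h' : ((2 : ℕ) ^ Nat.log 2 n : ℝ) ≤ (n : ℝ) := by exact_mod_cast h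
  calc (Nat.log 2 n : ℝ) * Real.log 2 = Real.log ((2 : ℝ) ^ Nat.log 2 n) := by
        rw [Real.log_pow]
    _ ≤ Real.log n := Real.log_le_log (by positivity) (by push_cast at h' ⊢; exact h')

lemma two_pow_cube (r : ℕ) : ((2 : ℝ) ^ r) ^ (3 : ℕ) = (2 : ℝ) ^ r * (4 : ℝ) ^ r := by
  rw [show (4 : ℝ) = 2 ^ 2 by norm_num, ← pow_mul, ← pow_mul, ← pow_add]
  congr 1
  omega

lemma two_pow_sq (r : ℕ) : ((2 : ℝ) ^ (r + 1)) ^ (2 : ℕ) = 4 * (4 : ℝ) ^ r := by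
  rw [show (4 : ℝ) = 2 ^ 2 by norm_num, ← pow_mul, ← pow_mul, ← pow_add]
  congr 1
  omega

lemma pow3_mul_rpow (γ : ℝ) (r : ℕ) :
    (2 : ℝ) ^ r * (4 : ℝ) ^ r * ((2 : ℝ) ^ r) ^ (-γ) = ((2 : ℝ) ^ ((3 : ℝ) - γ)) ^ r := by
  have h2r : (0 : ℝ) < (2 : ℝ) ^ r := by positivity
  rw [← two_pow_cube, ← Real.rpow_natCast ((2 : ℝ) ^ r) 3, ← Real.rpow_add h2r,
    show ((3 : ℕ) : ℝ) + -γ = (3 : ℝ) - γ by push_cast; ring,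
    ← Real.rpow_natCast 2 r, ← Real.rpow_mul (by norm_num), mul_comm,
    Real.rpow_mul (by norm_num), Real.rpow_natCast]

lemma band_out_sq_le [LinearOrder V] (G : SimpleGraph V) (r : ℕ) (v : V)
    (hv : v ∈ bandF G r) : ((outDeg G v : ℝ)) ^ 2 ≤ 4 * (4 : ℝ) ^ r := by
  have hmem : dg G v ∈ Finset.Icc (2 ^ r) (2 ^ (r + 1)) := by
    simpa [bandF] using hv
  have h1 : outDeg G v ≤ 2 ^ (r + 1) :=
    (outDeg_le_dg G v).trans (Finset.mem_Icc.mp hmem).2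
  have h2 : ((outDeg G v : ℝ)) ≤ (2 : ℝ) ^ (r + 1) := by
    calc ((outDeg G v : ℝ)) ≤ ((2 ^ (r + 1) : ℕ) : ℝ) := by exact_mod_cast h1
      _ = (2 : ℝ) ^ (r + 1) := by push_cast; ring
  calc ((outDeg G v : ℝ)) ^ 2 ≤ ((2 : ℝ) ^ (r + 1)) ^ 2 :=
        pow_le_pow_left₀ (by positivity) h2 2
    _ = 4 * (4 : ℝ) ^ r := two_pow_sq r

lemma band_sum_le [LinearOrder V] (G : SimpleGraph V) (r : ℕ) :
    ∑ v ∈ bandF G r, ((outDeg G v : ℝ)) ^ 2 ≤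
      ((bandF G r).card : ℝ) * (4 * (4 : ℝ) ^ r) := by
  have h := Finset.sum_le_card_nsmul (bandF G r) (fun v => ((outDeg G v : ℝ)) ^ 2)
    (4 * (4 : ℝ) ^ r) (fun v hv => band_out_sq_le G r v hv)
  simpa [nsmul_eq_mul] using h

lemma band_sum_le_H [LinearOrder V] (G : SimpleGraph V) (r : ℕ) :
    ∑ v ∈ bandF G r, ((outDeg G v : ℝ)) ^ 2 ≤
      ((bandF G r).card : ℝ) *
        (((Finset.univ.filter fun u => 2 ^ r ≤ dg G u).card : ℝ)) ^ 2 := by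
  have hb : ∀ v ∈ bandF G r, ((outDeg G v : ℝ)) ^ 2 ≤
      (((Finset.univ.filter fun u => 2 ^ r ≤ dg G u).card : ℝ)) ^ 2 := by
    intro v hv
    have hmem : dg G v ∈ Finset.Icc (2 ^ r) (2 ^ (r + 1)) := by simpa [bandF] using hv
    have h1 := outDeg_le_H G v r (Finset.mem_Icc.mp hmem).1
    have h2 : ((outDeg G v : ℝ)) ≤
        (((Finset.univ.filter fun u => 2 ^ r ≤ dg G u).card : ℝ)) := by exact_mod_cast h1
    exact pow_le_pow_left₀ (by positivity) h2 2
  have h := Finset.sum_le_card_nsmul (bandF G r) (fun v => ((outDeg G v : ℝ)) ^ 2) _ hb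
  simpa [nsmul_eq_mul] using h

end PLBAux

/-- For PLB graphs with exponent `γ = 3`, `Σ_v (d⁺_v)² ≤ C n log n`; for exponent
`γ > 3`, `Σ_v (d⁺_v)² ≤ C n` (constants depending only on `c₀` and `γ`). -/
theorem plb_outdeg_square_bound_large (c₀ : ℝ) (hc₀ : 0 < c₀) :
    (∃ C : ℝ, 0 < C ∧
      ∀ (V : Type) [Fintype V] [LinearOrder V] (G : SimpleGraph V),
        2 ≤ Fintype.card V → IsPLB G 3 c₀ →
          (∑ v : V, ((outDeg G v : ℝ)) ^ 2) ≤
            C * (Fintype.card V : ℝ) * Real.log (Fintype.card V)) ∧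
    (∀ γ : ℝ, 3 < γ →
      ∃ C : ℝ, 0 < C ∧
        ∀ (V : Type) [Fintype V] [LinearOrder V] (G : SimpleGraph V),
          2 ≤ Fintype.card V → IsPLB G γ c₀ →
            (∑ v : V, ((outDeg G v : ℝ)) ^ 2) ≤ C * (Fintype.card V : ℝ)) := by
  constructor
  · -- γ = 3
    refine ⟨32 * c₀ + 48 * c₀ ^ 3, by positivity, ?_⟩
    intro V _ _ G hn hPLB
    classical
    set n := Fintype.card V with hndef
    have hn2 : (2 : ℝ) ≤ (n : ℝ) := by exact_mod_cast hn
    have hnR : (0 : ℝ) < (n : ℝ) := by linarith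
    have hlog2 : (0.6931471803 : ℝ) < Real.log 2 := Real.log_two_gt_d9
    have hlogn : Real.log 2 ≤ Real.log n := Real.log_le_log (by norm_num) hn2
    -- band cardinality bound with γ = 3
    have key1 : ∀ r : ℕ, ((PLBAux.bandF G r).card : ℝ) ≤
        2 * c₀ * (n : ℝ) * ((4 : ℝ) ^ r)⁻¹ := by
      intro r
      have h := PLBAux.bandF_card_le G (by norm_num : (0:ℝ) < 3) hc₀ hPLB r
      have h2r : (0 : ℝ) < (2 : ℝ) ^ r := by positivity
      have e : (2 : ℝ) ^ r * ((2 : ℝ) ^ r) ^ (-(3 : ℝ)) = ((4 : ℝ) ^ r)⁻¹ := by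
        rw [show (-(3 : ℝ)) = -((3 : ℕ) : ℝ) by norm_num, Real.rpow_neg h2r.le,
          Real.rpow_natCast, PLBAux.two_pow_cube, mul_inv, ← mul_assoc,
          mul_inv_cancel₀ h2r.ne', one_mul]
      rw [e] at h
      exact h
    -- count of high-degree vertices
    have key2 : ∀ r : ℕ, (((Finset.univ.filter fun u => 2 ^ r ≤ PLBAux.dg G u).card : ℝ)) ≤
        3 * c₀ * (n : ℝ) * ((4 : ℝ) ^ r)⁻¹ := by
      intro r
      refine (PLBAux.H_card_le G r).trans ?_
      have h4r : (0 : ℝ) < (4 : ℝ) ^ r := by positivity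
      calc ∑ s ∈ Finset.Icc r n, ((PLBAux.bandF G s).card : ℝ)
          ≤ ∑ s ∈ Finset.Icc r n, 2 * c₀ * (n : ℝ) * ((4 : ℝ) ^ s)⁻¹ :=
            Finset.sum_le_sum fun s _ => key1 s
        _ = 2 * c₀ * (n : ℝ) * ∑ s ∈ Finset.Icc r n, ((4 : ℝ)⁻¹) ^ s := by
            rw [Finset.mul_sum]
            exact Finset.sum_congr rfl fun s _ => by rw [inv_pow]
        _ ≤ 2 * c₀ * (n : ℝ) * (((4 : ℝ)⁻¹) ^ r * (1 - (4 : ℝ)⁻¹)⁻¹) :=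
            mul_le_mul_of_nonneg_left
              (PLBAux.geom_Icc_le (by norm_num) (by norm_num) r n) (by positivity)
        _ ≤ 3 * c₀ * (n : ℝ) * ((4 : ℝ) ^ r)⁻¹ := by
            rw [inv_pow]
            have ht : (0 : ℝ) ≤ c₀ * (n : ℝ) * ((4 : ℝ) ^ r)⁻¹ := by positivity
            have he : (1 - (4 : ℝ)⁻¹)⁻¹ = 4 / 3 := by norm_num
            rw [he]
            nlinarith [ht]
    -- per-band bound
    have bandT : ∀ r : ℕ, ∑ v ∈ PLBAux.bandF G r, ((outDeg G v : ℝ)) ^ 2 ≤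
        (if 4 ^ r ≤ n then 8 * c₀ * (n : ℝ) else 18 * c₀ ^ 3 * (n : ℝ) * ((4 : ℝ) ^ r)⁻¹) := by
      intro r
      have h4r : (0 : ℝ) < (4 : ℝ) ^ r := by positivity
      by_cases h : 4 ^ r ≤ n
      · rw [if_pos h]
        calc ∑ v ∈ PLBAux.bandF G r, ((outDeg G v : ℝ)) ^ 2
            ≤ ((PLBAux.bandF G r).card : ℝ) * (4 * (4 : ℝ) ^ r) := PLBAux.band_sum_le G r
          _ ≤ (2 * c₀ * (n : ℝ) * ((4 : ℝ) ^ r)⁻¹) * (4 * (4 : ℝ) ^ r) :=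
              mul_le_mul_of_nonneg_right (key1 r) (by positivity)
          _ = 8 * c₀ * (n : ℝ) * (((4 : ℝ) ^ r)⁻¹ * (4 : ℝ) ^ r) := by ring
          _ = 8 * c₀ * (n : ℝ) := by rw [inv_mul_cancel₀ h4r.ne']; ring
      · rw [if_neg h]
        push_neg at h
        have hn4 : (n : ℝ) ≤ (4 : ℝ) ^ r := by
          calc (n : ℝ) ≤ ((4 ^ r : ℕ) : ℝ) := by exact_mod_cast h.le
            _ = (4 : ℝ) ^ r := by push_cast; ring
        have hq : (n : ℝ) * ((4 : ℝ) ^ r)⁻¹ ≤ 1 := by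
          rw [← div_eq_mul_inv]
          exact div_le_one_of_le₀ hn4 h4r.le
        calc ∑ v ∈ PLBAux.bandF G r, ((outDeg G v : ℝ)) ^ 2
            ≤ ((PLBAux.bandF G r).card : ℝ) *
              (((Finset.univ.filter fun u => 2 ^ r ≤ PLBAux.dg G u).card : ℝ)) ^ 2 :=
              PLBAux.band_sum_le_H G r
          _ ≤ (2 * c₀ * (n : ℝ) * ((4 : ℝ) ^ r)⁻¹) *
              (3 * c₀ * (n : ℝ) * ((4 : ℝ) ^ r)⁻¹) ^ 2 := by
              refine mul_le_mul (key1 r) ?_ (by positivity) (by positivity)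
              exact pow_le_pow_left₀ (by positivity) (key2 r) 2
          _ = 18 * c₀ ^ 3 * (n : ℝ) * ((4 : ℝ) ^ r)⁻¹ * ((n : ℝ) * ((4 : ℝ) ^ r)⁻¹) ^ 2 := by
              ring
          _ ≤ 18 * c₀ ^ 3 * (n : ℝ) * ((4 : ℝ) ^ r)⁻¹ * 1 := by
              refine mul_le_mul_of_nonneg_left ?_ (by positivity)
              calc ((n : ℝ) * ((4 : ℝ) ^ r)⁻¹) ^ 2 ≤ 1 ^ 2 :=
                    pow_le_pow_left₀ (by positivity) hq 2
                _ = 1 := one_pow 2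
          _ = 18 * c₀ ^ 3 * (n : ℝ) * ((4 : ℝ) ^ r)⁻¹ := mul_one _
    -- counting small bands
    have hcardf : ((Finset.range (n + 1)).filter fun r => 4 ^ r ≤ n).card ≤ Nat.log 4 n + 1 := by
      have hsub : ((Finset.range (n + 1)).filter fun r => 4 ^ r ≤ n) ⊆
          Finset.range (Nat.log 4 n + 1) := by
        intro r hr
        simp only [Finset.mem_filter, Finset.mem_range] at hr ⊢
        have := (Nat.le_log_iff_pow_le (by norm_num : 1 < 4) (by omega : n ≠ 0)).mpr hr.2
        omega
      simpa using Finset.card_le_card hsub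
    have hL4 : (Nat.log 4 n : ℝ) ≤ (Nat.log 2 n : ℝ) := by
      exact_mod_cast Nat.log_anti_left one_lt_two (by norm_num)
    have hL2 : (Nat.log 2 n : ℝ) ≤ 2 * Real.log n := by
      have h := PLBAux.natlog_le_log hn
      have hpos : (0 : ℝ) ≤ (Nat.log 2 n : ℝ) * (Real.log 2 - 1 / 2) :=
        mul_nonneg (Nat.cast_nonneg _) (by linarith)
      nlinarith [h, hpos]
    have hone : (1 : ℝ) ≤ 2 * Real.log n := by linarith
    have hlog41 : ((Nat.log 4 n : ℝ) + 1) ≤ 4 * Real.log n := by linarith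
    -- assemble
    calc ∑ v : V, ((outDeg G v : ℝ)) ^ 2
        ≤ ∑ r ∈ Finset.range (n + 1), ∑ v ∈ PLBAux.bandF G r, ((outDeg G v : ℝ)) ^ 2 := by
          refine PLBAux.sum_le_bands G _ (fun v => by positivity) (fun v hv => ?_)
          have h0 : outDeg G v = 0 := by
            have := PLBAux.outDeg_le_dg G v
            omega
          simp [h0]
      _ ≤ ∑ r ∈ Finset.range (n + 1),
          (if 4 ^ r ≤ n then 8 * c₀ * (n : ℝ) else 18 * c₀ ^ 3 * (n : ℝ) * ((4 : ℝ) ^ r)⁻¹) :=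
          Finset.sum_le_sum fun r _ => bandT r
      _ = ∑ r ∈ (Finset.range (n + 1)).filter (fun r => 4 ^ r ≤ n), 8 * c₀ * (n : ℝ) +
          ∑ r ∈ (Finset.range (n + 1)).filter (fun r => ¬ 4 ^ r ≤ n),
            18 * c₀ ^ 3 * (n : ℝ) * ((4 : ℝ) ^ r)⁻¹ := Finset.sum_ite _ _
      _ ≤ 32 * c₀ * (n : ℝ) * Real.log n + 48 * c₀ ^ 3 * (n : ℝ) * Real.log n := by
          refine add_le_add ?_ ?_
          · rw [Finset.sum_const, nsmul_eq_mul]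
            have hc : (((Finset.range (n + 1)).filter fun r => 4 ^ r ≤ n).card : ℝ)
                ≤ (Nat.log 4 n : ℝ) + 1 := by exact_mod_cast hcardf
            calc (((Finset.range (n + 1)).filter fun r => 4 ^ r ≤ n).card : ℝ) *
                  (8 * c₀ * (n : ℝ))
                ≤ (4 * Real.log n) * (8 * c₀ * (n : ℝ)) :=
                  mul_le_mul_of_nonneg_right (hc.trans hlog41) (by positivity)
              _ = 32 * c₀ * (n : ℝ) * Real.log n := by ring
          · calc ∑ r ∈ (Finset.range (n + 1)).filter (fun r => ¬ 4 ^ r ≤ n),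
                  18 * c₀ ^ 3 * (n : ℝ) * ((4 : ℝ) ^ r)⁻¹
                ≤ ∑ r ∈ Finset.range (n + 1), 18 * c₀ ^ 3 * (n : ℝ) * ((4 : ℝ) ^ r)⁻¹ :=
                  Finset.sum_le_sum_of_subset_of_nonneg (Finset.filter_subset _ _)
                    (fun i _ _ => by positivity)
              _ = 18 * c₀ ^ 3 * (n : ℝ) * ∑ r ∈ Finset.range (n + 1), ((4 : ℝ)⁻¹) ^ r := by
                  rw [Finset.mul_sum]
                  exact Finset.sum_congr rfl fun r _ => by rw [inv_pow]
              _ ≤ 18 * c₀ ^ 3 * (n : ℝ) * (1 - (4 : ℝ)⁻¹)⁻¹ :=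
                  mul_le_mul_of_nonneg_left
                    (PLBAux.geom_range_le (by norm_num) (by norm_num) _) (by positivity)
              _ = 24 * c₀ ^ 3 * (n : ℝ) := by norm_num; ring
              _ ≤ 48 * c₀ ^ 3 * (n : ℝ) * Real.log n := by
                  have hh : (0:ℝ) ≤ 24 * c₀ ^ 3 * (n : ℝ) * (2 * Real.log n - 1) :=
                    mul_nonneg (by positivity) (by linarith)
                  nlinarith [hh]
      _ = (32 * c₀ + 48 * c₀ ^ 3) * (n : ℝ) * Real.log n := by ring
  · -- γ > 3
    intro γ hγ
    set x := (2 : ℝ) ^ ((3 : ℝ) - γ) with hxdef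
    have hx0 : 0 < x := Real.rpow_pos_of_pos (by norm_num) _
    have hx1 : x < 1 := Real.rpow_lt_one_of_one_lt_of_neg (by norm_num) (by linarith)
    refine ⟨8 * c₀ * (1 - x)⁻¹, mul_pos (by positivity) (inv_pos.mpr (by linarith)), ?_⟩
    intro V _ _ G hn hPLB
    classical
    set n := Fintype.card V with hndef
    calc ∑ v : V, ((outDeg G v : ℝ)) ^ 2
        ≤ ∑ r ∈ Finset.range (n + 1), ∑ v ∈ PLBAux.bandF G r, ((outDeg G v : ℝ)) ^ 2 := by
          refine PLBAux.sum_le_bands G _ (fun v => by positivity) (fun v hv => ?_)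
          have h0 : outDeg G v = 0 := by
            have := PLBAux.outDeg_le_dg G v
            omega
          simp [h0]
      _ ≤ ∑ r ∈ Finset.range (n + 1), 8 * c₀ * (n : ℝ) * x ^ r := by
          refine Finset.sum_le_sum fun r _ => ?_
          calc ∑ v ∈ PLBAux.bandF G r, ((outDeg G v : ℝ)) ^ 2
              ≤ ((PLBAux.bandF G r).card : ℝ) * (4 * (4 : ℝ) ^ r) := PLBAux.band_sum_le G r
            _ ≤ (2 * c₀ * (n : ℝ) * ((2 : ℝ) ^ r * ((2 : ℝ) ^ r) ^ (-γ))) *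
                (4 * (4 : ℝ) ^ r) :=
                mul_le_mul_of_nonneg_right
                  (PLBAux.bandF_card_le G (by linarith : (0:ℝ) < γ) hc₀ hPLB r)
                  (by positivity)
            _ = 8 * c₀ * (n : ℝ) * ((2 : ℝ) ^ r * (4 : ℝ) ^ r * ((2 : ℝ) ^ r) ^ (-γ)) := by
                ring
            _ = 8 * c₀ * (n : ℝ) * x ^ r := by rw [PLBAux.pow3_mul_rpow γ r]
      _ = 8 * c₀ * (n : ℝ) * ∑ r ∈ Finset.range (n + 1), x ^ r := by rw [Finset.mul_sum]
      _ ≤ 8 * c₀ * (n : ℝ) * (1 - x)⁻¹ :=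
          mul_le_mul_of_nonneg_left (PLBAux.geom_range_le hx0.le hx1 _) (by positivity)
      _ = 8 * c₀ * (1 - x)⁻¹ * (n : ℝ) := by ring
end

section
/- Let G be a PLB graph on n vertices with exponent γ > 1 and constant c₀. Then the maximum degree of G is at most C · n^{1/(γ−1)} for a constant C depending only on c₀ and γ. -/
/-- The maximum degree of a PLB graph with exponent `γ > 1` is at most
`C n^(1/(γ-1))` for a constant `C` depending only on `c₀` and `γ`. -/
theorem plb_max_degree_bound (γ c₀ : ℝ) (hγ : 1 < γ) (hc₀ : 0 < c₀) :
    ∃ C : ℝ, 0 < C ∧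
      ∀ (V : Type) [Fintype V] (G : SimpleGraph V), IsPLB G γ c₀ →
        ∀ v : V, ({u | G.Adj v u}.ncard : ℝ) ≤
          C * (Fintype.card V : ℝ) ^ (1 / (γ - 1)) := by
  have hγ1 : (0:ℝ) < γ - 1 := by linarith
  refine ⟨2 * (2 * c₀ + 1) ^ (1 / (γ - 1)), by positivity, ?_⟩
  intro V _ G hG v
  set n : ℝ := (Fintype.card V : ℝ) with hn
  have hn1 : (1:ℝ) ≤ n := by
    have : 0 < Fintype.card V := Fintype.card_pos_iff.mpr ⟨v⟩
    rw [hn]; exact_mod_cast this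
  set D := {u | G.Adj v u}.ncard with hDdef
  rcases Nat.eq_zero_or_pos D with h0 | hD1
  · rw [h0]; push_cast; positivity
  · set r := Nat.log 2 D with hr
    have hlo : 2 ^ r ≤ D := Nat.pow_log_le_self 2 (by omega)
    have hhi : D ≤ 2 ^ (r + 1) := (Nat.lt_pow_succ_log_self (by norm_num) D).le
    have hdc : (1:ℝ) ≤ (degCount G D : ℝ) := by
      have : 0 < degCount G D :=
        (Set.ncard_pos (Set.toFinite _)).mpr ⟨v, rfl⟩
      exact_mod_cast this
    have hsum1 : (1:ℝ) ≤ ∑ d ∈ Finset.Icc (2 ^ r : ℕ) (2 ^ (r + 1)), (degCount G d : ℝ) := by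
      refine hdc.trans (Finset.single_le_sum (f := fun d => (degCount G d : ℝ))
        (fun i _ => by positivity) (Finset.mem_Icc.mpr ⟨hlo, hhi⟩))
    set x : ℝ := ((2 ^ r : ℕ) : ℝ) with hx
    have hx1 : (1:ℝ) ≤ x := by
      have : 1 ≤ 2 ^ r := Nat.one_le_two_pow
      rw [hx]; exact_mod_cast this
    have hx0 : (0:ℝ) < x := lt_of_lt_of_le one_pos hx1
    have hcard : ((Finset.Icc (2 ^ r : ℕ) (2 ^ (r + 1))).card : ℝ) ≤ 2 * x := by
      rw [Nat.card_Icc]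
      have h2 : (2:ℕ) ^ (r + 1) = 2 * 2 ^ r := by ring
      have : 2 ^ (r + 1) + 1 - 2 ^ r ≤ 2 * 2 ^ r := by omega
      calc ((2 ^ (r + 1) + 1 - 2 ^ r : ℕ) : ℝ) ≤ ((2 * 2 ^ r : ℕ) : ℝ) := by exact_mod_cast this
        _ = 2 * x := by push_cast [hx]; ring
    have hsum2 : ∑ d ∈ Finset.Icc (2 ^ r : ℕ) (2 ^ (r + 1)), (d : ℝ) ^ (-γ)
        ≤ 2 * x * x ^ (-γ) := by
      calc ∑ d ∈ Finset.Icc (2 ^ r : ℕ) (2 ^ (r + 1)), (d : ℝ) ^ (-γ)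
          ≤ ∑ _d ∈ Finset.Icc (2 ^ r : ℕ) (2 ^ (r + 1)), x ^ (-γ) := by
            refine Finset.sum_le_sum fun d hd => ?_
            have h1 : x ≤ (d : ℝ) := by
              rw [hx]; exact_mod_cast (Finset.mem_Icc.mp hd).1
            exact Real.rpow_le_rpow_of_nonpos hx0 h1 (by linarith)
        _ = ((Finset.Icc (2 ^ r : ℕ) (2 ^ (r + 1))).card : ℝ) * x ^ (-γ) := by
            rw [Finset.sum_const, nsmul_eq_mul]
        _ ≤ 2 * x * x ^ (-γ) := by
            have : (0:ℝ) ≤ x ^ (-γ) := Real.rpow_nonneg hx0.le _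
            exact mul_le_mul_of_nonneg_right hcard this
    have key : x ^ (γ - 1) ≤ 2 * c₀ * n := by
      have h1 : (1:ℝ) ≤ c₀ * n * (2 * x * x ^ (-γ)) := by
        calc (1:ℝ) ≤ ∑ d ∈ Finset.Icc (2 ^ r : ℕ) (2 ^ (r + 1)), (degCount G d : ℝ) := hsum1
          _ ≤ c₀ * n * ∑ d ∈ Finset.Icc (2 ^ r : ℕ) (2 ^ (r + 1)), (d : ℝ) ^ (-γ) := hG r
          _ ≤ c₀ * n * (2 * x * x ^ (-γ)) :=
            mul_le_mul_of_nonneg_left hsum2 (by positivity)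
      have hxx : x * x ^ (-γ) = x ^ (-(γ - 1)) := by
        rw [neg_sub, Real.rpow_sub hx0, Real.rpow_one, Real.rpow_neg hx0.le]
        field_simp
      have h2 : (1:ℝ) ≤ 2 * c₀ * n * x ^ (-(γ - 1)) := by
        calc (1:ℝ) ≤ c₀ * n * (2 * x * x ^ (-γ)) := h1
          _ = 2 * c₀ * n * (x * x ^ (-γ)) := by ring
          _ = 2 * c₀ * n * x ^ (-(γ - 1)) := by rw [hxx]
      have hp : (0:ℝ) < x ^ (γ - 1) := Real.rpow_pos_of_pos hx0 _
      have := mul_le_mul_of_nonneg_right h2 hp.le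
      rwa [one_mul, mul_assoc, Real.rpow_neg hx0.le, inv_mul_cancel₀ hp.ne',
        mul_one] at this
    have hxle : x ≤ (2 * c₀ * n) ^ (1 / (γ - 1)) := by
      have := Real.rpow_le_rpow (by positivity) key (le_of_lt (by positivity :
        (0:ℝ) < 1 / (γ - 1)))
      rw [one_div] at this ⊢
      rwa [Real.rpow_rpow_inv hx0.le hγ1.ne'] at this
    have hfin : (2 * c₀ * n) ^ (1 / (γ - 1))
        ≤ (2 * c₀ + 1) ^ (1 / (γ - 1)) * n ^ (1 / (γ - 1)) := by
      rw [Real.mul_rpow (by positivity) (by positivity)]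
      refine mul_le_mul_of_nonneg_right ?_ (Real.rpow_nonneg (by linarith) _)
      exact Real.rpow_le_rpow (by positivity) (by linarith) (by positivity)
    calc (D : ℝ) ≤ ((2 ^ (r + 1) : ℕ) : ℝ) := by exact_mod_cast hhi
      _ = 2 * x := by push_cast [hx]; ring
      _ ≤ 2 * ((2 * c₀ + 1) ^ (1 / (γ - 1)) * n ^ (1 / (γ - 1))) := by
          have := hxle.trans hfin
          linarith
      _ = 2 * (2 * c₀ + 1) ^ (1 / (γ - 1)) * n ^ (1 / (γ - 1)) := by ring
end

section
/- Let G be a PLB graph on n vertices with exponent γ > 1 and constant c₀. Then the degeneracy of G is at most C · n^{1/γ} for a constant C depending only on c₀ and γ; that is, every nonempty induced subgraph of G contains a vertex whose degree within that subgraph is at most C · n^{1/γ}. -/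
lemma geom_tail_le {q : ℝ} (h0 : 0 ≤ q) (h1 : q < 1) (a b : ℕ) :
    ∑ r ∈ Finset.Icc a b, q ^ r ≤ q ^ a * (1 - q)⁻¹ := by
  have h1q : 0 < 1 - q := by linarith
  rcases le_or_gt a b with hab | hab
  · rw [← Finset.Ico_add_one_right_eq_Icc, Finset.sum_Ico_eq_sum_range]
    have : ∀ i ∈ Finset.range (b + 1 - a), q ^ (a + i) = q ^ a * q ^ i := by
      intro i _; rw [pow_add]
    rw [Finset.sum_congr rfl this, ← Finset.mul_sum]
    have hgs : ∑ i ∈ Finset.range (b + 1 - a), q ^ i ≤ (1 - q)⁻¹ := by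
      rw [geom_sum_eq h1.ne]
      rw [div_le_iff_of_neg (by linarith : q - 1 < 0)]
      have hk : 0 ≤ q ^ (b + 1 - a) := pow_nonneg h0 _
      have h2 : (1 - q)⁻¹ * (q - 1) = -1 := by field_simp; ring
      rw [h2]; linarith
    exact mul_le_mul_of_nonneg_left hgs (pow_nonneg h0 _)
  · rw [Finset.Icc_eq_empty (by omega)]
    simp only [Finset.sum_empty]
    positivity

/-- The degeneracy of a PLB graph with exponent `γ > 1` is at most `C n^(1/γ)`:
every nonempty induced subgraph has a vertex of induced degree at most `C n^(1/γ)`. -/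
theorem plb_degeneracy_bound (γ c₀ : ℝ) (hγ : 1 < γ) (hc₀ : 0 < c₀) :
    ∃ C : ℝ, 0 < C ∧
      ∀ (V : Type) [Fintype V] (G : SimpleGraph V), IsPLB G γ c₀ →
        ∀ A : Set V, A.Nonempty → ∃ v : A,
          ({u : A | (G.induce A).Adj v u}.ncard : ℝ) ≤
            C * (Fintype.card V : ℝ) ^ (1 / γ) := by
  classical
  have hγ0 : (0:ℝ) < γ := by linarith
  set q : ℝ := (2:ℝ) ^ (1 - γ) with hqdef
  have hq0 : 0 < q := Real.rpow_pos_of_pos two_pos _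
  have hq1 : q < 1 := Real.rpow_lt_one_of_one_lt_of_neg one_lt_two (by linarith)
  have h1q : 0 < 1 - q := by linarith
  set K : ℝ := c₀ * 2 * (2:ℝ) ^ (γ - 1) * (1 - q)⁻¹ with hKdef
  have hK0 : 0 < K := by
    have h2 : 0 < (2:ℝ) ^ (γ - 1) := Real.rpow_pos_of_pos two_pos _
    positivity
  set C : ℝ := max 1 (K ^ (1/γ)) with hCdef
  have hC1 : (1:ℝ) ≤ C := le_max_left _ _
  refine ⟨C, by linarith, ?_⟩
  intro V _ G hPLB A hA
  by_contra hcon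
  push_neg at hcon
  obtain ⟨v₀, hv₀⟩ := hA
  have hVne : Nonempty V := ⟨v₀⟩
  set n : ℕ := Fintype.card V with hndef
  have hn1 : 1 ≤ n := Fintype.card_pos
  have hn0 : (0:ℝ) < n := by exact_mod_cast hn1
  set T : ℝ := C * (n:ℝ) ^ (1/γ) with hTdef
  have hnr1 : (1:ℝ) ≤ (n:ℝ) ^ (1/γ) := by
    calc (1:ℝ) = (1:ℝ) ^ (1/γ) := (Real.one_rpow _).symm
    _ ≤ (n:ℝ) ^ (1/γ) :=
      Real.rpow_le_rpow zero_le_one (by exact_mod_cast hn1) (by positivity)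
  have hT1 : 1 ≤ T := by
    calc (1:ℝ) = 1 * 1 := by ring
    _ ≤ C * (n:ℝ) ^ (1/γ) := mul_le_mul hC1 hnr1 zero_le_one (by linarith)
  have hT0 : 0 < T := by linarith
  set deg : V → ℕ := fun v => {w | G.Adj v w}.ncard with hdegdef
  -- induced degree bounded by degree in G
  have hdegA : ∀ v, ∀ hv : v ∈ A, T < deg v := by
    intro v hv
    refine lt_of_lt_of_le (hcon ⟨v, hv⟩) ?_
    have himg : (Subtype.val '' {u : A | (G.induce A).Adj ⟨v, hv⟩ u}) ⊆ {w | G.Adj v w} := by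
      rintro w ⟨u, hu, rfl⟩
      exact hu
    have : {u : A | (G.induce A).Adj ⟨v, hv⟩ u}.ncard
        = (Subtype.val '' {u : A | (G.induce A).Adj ⟨v, hv⟩ u}).ncard :=
      (Set.ncard_image_of_injective _ Subtype.val_injective).symm
    rw [this]
    exact_mod_cast Set.ncard_le_ncard himg (Set.toFinite _)
  -- T < |A|
  have hTA : T < (A.ncard : ℝ) := by
    refine lt_of_lt_of_le (hcon ⟨v₀, hv₀⟩) ?_
    have h1 : {u : A | (G.induce A).Adj ⟨v₀, hv₀⟩ u}.ncard ≤ (Set.univ : Set A).ncard :=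
      Set.ncard_le_ncard (Set.subset_univ _) (Set.toFinite _)
    have h2 : (Set.univ : Set A).ncard = A.ncard := by
      rw [Set.ncard_univ, Nat.card_coe_set_eq]
    exact_mod_cast h1.trans_eq h2
  -- the finset of high degree vertices
  set S : Finset V := Finset.univ.filter (fun v => T < (deg v : ℝ)) with hSdef
  have hAS : (A.ncard : ℝ) ≤ (S.card : ℝ) := by
    have : A.toFinset ⊆ S := by
      intro v hv
      rw [Set.mem_toFinset] at hv
      exact Finset.mem_filter.mpr ⟨Finset.mem_univ v, hdegA v hv⟩
    rw [Set.ncard_eq_toFinset_card' A]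
    exact_mod_cast Finset.card_le_card this
  -- dyadic setup
  set t : ℕ := ⌊T⌋₊ with htdef
  have ht1 : 1 ≤ t := (Nat.one_le_floor_iff _).mpr hT1
  set r₀ : ℕ := Nat.log 2 t with hr₀def
  set R : ℕ := Nat.log 2 n with hRdef
  have h2r₀T : ((2:ℕ) ^ r₀ : ℝ) ≤ T := by
    have h1 : (2:ℕ) ^ r₀ ≤ t := Nat.pow_log_le_self 2 (by omega)
    calc ((2:ℕ) ^ r₀ : ℝ) ≤ (t : ℝ) := by exact_mod_cast h1
    _ ≤ T := Nat.floor_le hT0.le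
  have hT2r₀ : T < ((2:ℕ) ^ (r₀ + 1) : ℝ) := by
    have h1 : t < 2 ^ (r₀ + 1) := Nat.lt_pow_succ_log_self one_lt_two t
    have h2 : T < (t : ℝ) + 1 := Nat.lt_floor_add_one T
    have h3 : (t : ℝ) + 1 ≤ ((2:ℕ) ^ (r₀ + 1) : ℝ) := by exact_mod_cast h1
    linarith
  -- covering S by dyadic classes
  have hsub : S ⊆ (Finset.Icc r₀ R).biUnion
      (fun r => Finset.univ.filter (fun v => deg v ∈ Finset.Icc (2 ^ r) (2 ^ (r + 1)))) := by
    intro v hv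
    have hv' : T < (deg v : ℝ) := (Finset.mem_filter.mp hv).2
    have hd0 : deg v ≠ 0 := by
      intro h
      rw [h] at hv'
      simp only [Nat.cast_zero] at hv'
      linarith
    set r : ℕ := Nat.log 2 (deg v) with hrdef
    have h1 : 2 ^ r ≤ deg v := Nat.pow_log_le_self 2 hd0
    have h2 : deg v < 2 ^ (r + 1) := Nat.lt_pow_succ_log_self one_lt_two _
    have hdn : deg v ≤ n := by
      have : {w | G.Adj v w}.ncard ≤ (Set.univ : Set V).ncard :=
        Set.ncard_le_ncard (Set.subset_univ _) (Set.toFinite _)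
      rw [Set.ncard_univ, Nat.card_eq_fintype_card] at this
      exact this
    have hrR : r ≤ R := Nat.log_mono_right hdn
    have hr₀r : r₀ ≤ r := by
      have ha : ((2:ℕ) ^ r₀ : ℝ) < ((2:ℕ) ^ (r + 1) : ℝ) := by
        have : (deg v : ℝ) ≤ ((2:ℕ) ^ (r + 1) : ℝ) := by exact_mod_cast h2.le
        linarith
      have hb : (2:ℕ) ^ r₀ < 2 ^ (r + 1) := by exact_mod_cast ha
      have := (Nat.pow_lt_pow_iff_right (by norm_num : 1 < 2)).mp hb
      omega
    refine Finset.mem_biUnion.mpr ⟨r, Finset.mem_Icc.mpr ⟨hr₀r, hrR⟩, ?_⟩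
    exact Finset.mem_filter.mpr ⟨Finset.mem_univ v, Finset.mem_Icc.mpr ⟨h1, h2.le⟩⟩
  have hScard : S.card ≤ ∑ r ∈ Finset.Icc r₀ R,
      (Finset.univ.filter (fun v => deg v ∈ Finset.Icc (2 ^ r) (2 ^ (r + 1)))).card :=
    (Finset.card_le_card hsub).trans Finset.card_biUnion_le
  -- per-class bound
  have hper : ∀ r : ℕ,
      ((Finset.univ.filter (fun v => deg v ∈ Finset.Icc (2 ^ r) (2 ^ (r + 1)))).card : ℝ)
        ≤ c₀ * n * (2 * q ^ r) := by
    intro r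
    have hfib : (Finset.univ.filter (fun v => deg v ∈ Finset.Icc (2 ^ r) (2 ^ (r + 1)))).card
        ≤ ∑ d ∈ Finset.Icc (2 ^ r : ℕ) (2 ^ (r + 1)), degCount G d := by
      rw [Finset.card_eq_sum_card_fiberwise
        (s := Finset.univ.filter (fun v => deg v ∈ Finset.Icc (2 ^ r) (2 ^ (r + 1))))
        (f := deg) (t := Finset.Icc (2 ^ r : ℕ) (2 ^ (r + 1)))
        (fun v hv => (Finset.mem_filter.mp hv).2)]
      refine Finset.sum_le_sum fun d _ => ?_
      have hdc : degCount G d = (Finset.univ.filter (fun v => deg v = d)).card := by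
        rw [degCount, Set.ncard_eq_toFinset_card']
        congr 1
        ext v
        simp [hdegdef]
      rw [hdc]
      refine Finset.card_le_card fun v hv => ?_
      exact Finset.mem_filter.mpr ⟨Finset.mem_univ v, (Finset.mem_filter.mp hv).2⟩
    have hsum : ∑ d ∈ Finset.Icc (2 ^ r : ℕ) (2 ^ (r + 1)), (d : ℝ) ^ (-γ) ≤ 2 * q ^ r := by
      have hbound : ∀ d ∈ Finset.Icc (2 ^ r : ℕ) (2 ^ (r + 1)),
          (d : ℝ) ^ (-γ) ≤ (((2:ℕ) ^ r : ℕ) : ℝ) ^ (-γ) := by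
        intro d hd
        have h1 : (2:ℕ) ^ r ≤ d := (Finset.mem_Icc.mp hd).1
        exact Real.rpow_le_rpow_of_nonpos (by positivity) (by exact_mod_cast h1)
          (by linarith)
      calc ∑ d ∈ Finset.Icc (2 ^ r : ℕ) (2 ^ (r + 1)), (d : ℝ) ^ (-γ)
          ≤ (Finset.Icc (2 ^ r : ℕ) (2 ^ (r + 1))).card • ((((2:ℕ) ^ r : ℕ) : ℝ) ^ (-γ)) :=
            Finset.sum_le_card_nsmul _ _ _ hbound
        _ = ((2 ^ r + 1 : ℕ) : ℝ) * (((2:ℕ) ^ r : ℕ) : ℝ) ^ (-γ) := by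
            have hIcc : (Finset.Icc (2 ^ r : ℕ) (2 ^ (r + 1))).card = 2 ^ r + 1 := by
              rw [Nat.card_Icc, pow_succ]
              omega
            rw [hIcc, nsmul_eq_mul]
        _ ≤ (2 * ((2:ℕ) ^ r : ℝ)) * (((2:ℕ) ^ r : ℕ) : ℝ) ^ (-γ) := by
            have hge : (0:ℝ) ≤ (((2:ℕ) ^ r : ℕ) : ℝ) ^ (-γ) := by positivity
            refine mul_le_mul_of_nonneg_right ?_ hge
            push_cast
            have : (1:ℝ) ≤ 2 ^ r := one_le_pow₀ one_le_two
            linarith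
        _ = 2 * q ^ r := by
            push_cast
            rw [← Real.rpow_natCast (2:ℝ) r, ← Real.rpow_mul (by norm_num : (0:ℝ) ≤ 2),
              ← Real.rpow_natCast q r, hqdef, ← Real.rpow_mul (by norm_num : (0:ℝ) ≤ 2),
              mul_assoc, ← Real.rpow_add (by norm_num : (0:ℝ) < 2)]
            ring_nf
    calc ((Finset.univ.filter (fun v => deg v ∈ Finset.Icc (2 ^ r) (2 ^ (r + 1)))).card : ℝ)
        ≤ ∑ d ∈ Finset.Icc (2 ^ r : ℕ) (2 ^ (r + 1)), (degCount G d : ℝ) := by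
          exact_mod_cast hfib
      _ ≤ c₀ * n * ∑ d ∈ Finset.Icc (2 ^ r : ℕ) (2 ^ (r + 1)), (d : ℝ) ^ (-γ) := hPLB r
      _ ≤ c₀ * n * (2 * q ^ r) := by
          refine mul_le_mul_of_nonneg_left hsum (by positivity)
  -- assemble the counting bound
  have hq_r₀ : q ^ r₀ ≤ (T / 2) ^ (1 - γ) := by
    have hq_eq : q ^ r₀ = (((2:ℕ) ^ r₀ : ℕ) : ℝ) ^ (1 - γ) := by
      push_cast
      rw [← Real.rpow_natCast q r₀, hqdef, ← Real.rpow_natCast (2:ℝ) r₀,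
        ← Real.rpow_mul (by norm_num : (0:ℝ) ≤ 2), ← Real.rpow_mul (by norm_num : (0:ℝ) ≤ 2)]
      ring_nf
    rw [hq_eq]
    refine Real.rpow_le_rpow_of_nonpos (by positivity) ?_ (by linarith)
    -- T/2 ≤ 2^r₀
    push_cast at hT2r₀ ⊢
    rw [pow_succ] at hT2r₀
    linarith
  have hmain : (S.card : ℝ) ≤ K * n * T ^ (1 - γ) := by
    have h1 : (S.card : ℝ) ≤ ∑ r ∈ Finset.Icc r₀ R, c₀ * n * (2 * q ^ r) := by
      calc (S.card : ℝ) ≤ (∑ r ∈ Finset.Icc r₀ R,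
          (Finset.univ.filter (fun v => deg v ∈ Finset.Icc (2 ^ r) (2 ^ (r + 1)))).card : ℕ) := by
            exact_mod_cast hScard
        _ = ∑ r ∈ Finset.Icc r₀ R,
            ((Finset.univ.filter (fun v => deg v ∈ Finset.Icc (2 ^ r) (2 ^ (r + 1)))).card : ℝ) := by
            push_cast; ring
        _ ≤ ∑ r ∈ Finset.Icc r₀ R, c₀ * n * (2 * q ^ r) :=
            Finset.sum_le_sum fun r _ => hper r
    have h2 : ∑ r ∈ Finset.Icc r₀ R, c₀ * n * (2 * q ^ r)
        = c₀ * n * 2 * ∑ r ∈ Finset.Icc r₀ R, q ^ r := by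
      rw [Finset.mul_sum]; refine Finset.sum_congr rfl fun r _ => by ring
    have h3 : ∑ r ∈ Finset.Icc r₀ R, q ^ r ≤ q ^ r₀ * (1 - q)⁻¹ :=
      geom_tail_le hq0.le hq1 r₀ R
    have h4 : q ^ r₀ * (1 - q)⁻¹ ≤ (T / 2) ^ (1 - γ) * (1 - q)⁻¹ :=
      mul_le_mul_of_nonneg_right hq_r₀ (by positivity)
    have h5 : (T / 2) ^ (1 - γ) = T ^ (1 - γ) * (2:ℝ) ^ (γ - 1) := by
      rw [Real.div_rpow hT0.le (by norm_num : (0:ℝ) ≤ 2)]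
      rw [div_eq_mul_inv, ← Real.rpow_neg (by norm_num : (0:ℝ) ≤ 2)]
      ring_nf
    have hKn : c₀ * n * 2 * ((T / 2) ^ (1 - γ) * (1 - q)⁻¹) = K * n * T ^ (1 - γ) := by
      rw [h5, hKdef]; ring
    calc (S.card : ℝ) ≤ c₀ * n * 2 * ∑ r ∈ Finset.Icc r₀ R, q ^ r := by rw [← h2]; exact h1
      _ ≤ c₀ * n * 2 * (q ^ r₀ * (1 - q)⁻¹) :=
          mul_le_mul_of_nonneg_left h3 (by positivity)
      _ ≤ c₀ * n * 2 * ((T / 2) ^ (1 - γ) * (1 - q)⁻¹) :=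
          mul_le_mul_of_nonneg_left h4 (by positivity)
      _ = K * n * T ^ (1 - γ) := hKn
  -- contradiction
  have hfinal : T < K * n * T ^ (1 - γ) := lt_of_lt_of_le (hTA.trans_le hAS) hmain
  have hTg : T ^ γ < K * n := by
    have hpos : (0:ℝ) < T ^ (γ - 1) := Real.rpow_pos_of_pos hT0 _
    have h := mul_lt_mul_of_pos_right hfinal hpos
    have e1 : T * T ^ (γ - 1) = T ^ γ := by
      nth_rewrite 1 [← Real.rpow_one T]
      rw [← Real.rpow_add hT0]; ring_nf
    have e2 : K * n * T ^ (1 - γ) * T ^ (γ - 1) = K * n := by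
      rw [mul_assoc, ← Real.rpow_add hT0]
      norm_num
    rw [e1, e2] at h
    exact h
  have hTg_eq : T ^ γ = C ^ γ * n := by
    rw [hTdef, Real.mul_rpow (by linarith : (0:ℝ) ≤ C) (by positivity),
      ← Real.rpow_mul hn0.le, one_div, inv_mul_cancel₀ hγ0.ne', Real.rpow_one]
  have hCK : C ^ γ < K := by
    have h := hTg_eq ▸ hTg
    exact lt_of_mul_lt_mul_right (by linarith [h]) hn0.le |>.trans_le le_rfl
  have hKC : K ≤ C ^ γ := by
    have hle : K ^ (1/γ) ≤ C := le_max_right _ _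
    calc K = (K ^ (1/γ)) ^ γ := by
          rw [← Real.rpow_mul hK0.le, one_div, inv_mul_cancel₀ hγ0.ne', Real.rpow_one]
      _ ≤ C ^ γ := Real.rpow_le_rpow (by positivity) hle hγ0.le
  linarith
end
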